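/- arXiv:1101.5032 — 3 statements merged into one kernel-verified Lean document; each statement's English description precedes it below -/
import Mathlib

section
/- Let q₀ ≤ q₁ ≤ q₂ ≤ q₃ be indices, and for each integer x let A(x) ⊆ [0,1] be a finite union of closed dyadic intervals, with B_q = ⋂_{x=q₀}^{q} ([0,1] \ A(x)). Suppose (i) mes(B_{q₂}) ≥ mes(B_{q₁})/2 > 0, (ii) for every x with q₂ < x ≤ q₃ one has mes(B_{q₁} ∩ A(x)) ≤ 2⁴·σ(x)·mes(B_{q₁}) for some σ(x) ≥ 0, and (iii) Σ_{q₂ < x ≤ q₃} σ(x) ≤ 2⁻⁶. Then mes(B_{q₃}) ≥ mes(B_{q₂})/2 > 0. -/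
open MeasureTheory

theorem stmt9 (q₀ q₁ q₂ q₃ : ℕ) (h01 : q₀ ≤ q₁) (h12 : q₁ ≤ q₂) (h23 : q₂ ≤ q₃)
    (A : ℕ → Set ℝ) (hA : ∀ x, MeasurableSet (A x))
    (B : ℕ → Set ℝ)
    (hB : ∀ q, B q = ⋂ x ∈ Finset.Icc q₀ q, (Set.Icc (0:ℝ) 1 \ A x))
    (σ : ℕ → NNReal)
    (h1 : volume (B q₁) / 2 ≤ volume (B q₂)) (h1' : 0 < volume (B q₁))
    (h2 : ∀ x, q₂ < x → x ≤ q₃ →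
      volume (B q₁ ∩ A x) ≤ 2^4 * (σ x : ENNReal) * volume (B q₁))
    (h3 : (∑ x ∈ Finset.Ioc q₂ q₃, σ x) ≤ (1/2^6 : NNReal)) :
    volume (B q₂) / 2 ≤ volume (B q₃) ∧ 0 < volume (B q₃) := by
  -- B q ⊆ [0,1] when q₀ ≤ q
  have hBsub : ∀ q, q₀ ≤ q → B q ⊆ Set.Icc (0:ℝ) 1 := by
    intro q hq x hx
    rw [hB q] at hx
    exact (Set.mem_iInter₂.1 hx q₀ (Finset.mem_Icc.2 ⟨le_rfl, hq⟩)).1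
  -- B q₂ ⊆ B q₁
  have hsub21 : B q₂ ⊆ B q₁ := by
    intro x hx
    rw [hB q₂] at hx; rw [hB q₁]
    apply Set.mem_iInter₂.2
    intro y hy
    rcases Finset.mem_Icc.1 hy with ⟨hy1, hy2⟩
    exact Set.mem_iInter₂.1 hx y (Finset.mem_Icc.2 ⟨hy1, hy2.trans h12⟩)
  -- finiteness
  have hIccfin : volume (Set.Icc (0:ℝ) 1) ≠ ⊤ := by
    rw [Real.volume_Icc]; simp
  have hfin2 : volume (B q₂) ≠ ⊤ :=
    ne_top_of_le_ne_top hIccfin (measure_mono (hBsub q₂ (h01.trans h12)))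
  -- vol(B q₁) ≤ 2 * vol(B q₂)
  have h12' : volume (B q₁) ≤ 2 * volume (B q₂) := by
    have := mul_le_mul_right h1 (2 : ENNReal)
    rwa [ENNReal.mul_div_cancel' (by norm_num) (by norm_num)] at this
  -- key inclusion: B q₂ \ ⋃ A x ⊆ B q₃
  have hincl : B q₂ \ (⋃ x ∈ Finset.Ioc q₂ q₃, A x) ⊆ B q₃ := by
    rintro x ⟨hx2, hxU⟩
    rw [hB q₃]
    apply Set.mem_iInter₂.2
    intro y hy
    rcases Finset.mem_Icc.1 hy with ⟨hy1, hy2⟩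
    by_cases hyc : y ≤ q₂
    · rw [hB q₂] at hx2
      exact Set.mem_iInter₂.1 hx2 y (Finset.mem_Icc.2 ⟨hy1, hyc⟩)
    · push_neg at hyc
      refine ⟨hBsub q₂ (h01.trans h12) hx2, ?_⟩
      intro hxy
      exact hxU (Set.mem_biUnion (Finset.mem_Ioc.2 ⟨hyc, hy2⟩) hxy)
  -- sum bound
  have hsum : ∑ x ∈ Finset.Ioc q₂ q₃, volume (B q₂ ∩ A x) ≤ volume (B q₂) / 2 := by
    calc ∑ x ∈ Finset.Ioc q₂ q₃, volume (B q₂ ∩ A x)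
        ≤ ∑ x ∈ Finset.Ioc q₂ q₃, 2^4 * (σ x : ENNReal) * volume (B q₁) := by
          apply Finset.sum_le_sum
          intro x hx
          rcases Finset.mem_Ioc.1 hx with ⟨hx1, hx2⟩
          exact le_trans (measure_mono (Set.inter_subset_inter_left _ hsub21)) (h2 x hx1 hx2)
      _ = 2^4 * (↑(∑ x ∈ Finset.Ioc q₂ q₃, σ x) : ENNReal) * volume (B q₁) := by
          rw [ENNReal.coe_finset_sum, Finset.mul_sum, Finset.sum_mul]
      _ ≤ 2^4 * ((1/2^6 : NNReal) : ENNReal) * (2 * volume (B q₂)) := by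
          exact mul_le_mul' (mul_le_mul_right (ENNReal.coe_le_coe.2 h3) _) h12'
      _ = volume (B q₂) / 2 := by
          set v := volume (B q₂)
          have hc : ((1/2^6 : NNReal) : ENNReal) = 1/2^6 := by
            rw [ENNReal.coe_div (by norm_num)]; push_cast; ring
          rw [hc, ENNReal.div_eq_inv_mul, ENNReal.div_eq_inv_mul, ENNReal.inv_pow]
          have h2' : (2:ENNReal)⁻¹ * 2 = 1 := ENNReal.inv_mul_cancel (by norm_num) (by norm_num)
          calc (2:ENNReal)^4 * (((2:ENNReal)⁻¹)^6 * 1) * (2 * v)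
              = ((2:ENNReal)⁻¹ * 2)^4 * ((2:ENNReal)⁻¹ * 2) * ((2:ENNReal)⁻¹ * v) := by ring
            _ = 2⁻¹ * v := by rw [h2']; ring
  -- main estimate: vol(B q₂) ≤ vol(B q₃) + vol(B q₂)/2
  have hmain : volume (B q₂) ≤ volume (B q₃) + volume (B q₂) / 2 := by
    calc volume (B q₂)
        = volume ((B q₂ \ (⋃ x ∈ Finset.Ioc q₂ q₃, A x)) ∪
            (B q₂ ∩ (⋃ x ∈ Finset.Ioc q₂ q₃, A x))) := by rw [Set.diff_union_inter]
      _ ≤ volume (B q₂ \ (⋃ x ∈ Finset.Ioc q₂ q₃, A x)) +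
            volume (B q₂ ∩ (⋃ x ∈ Finset.Ioc q₂ q₃, A x)) := measure_union_le _ _
      _ ≤ volume (B q₃) + volume (B q₂) / 2 := by
          refine add_le_add (measure_mono hincl) ?_
          rw [Set.inter_iUnion₂]
          exact le_trans (measure_biUnion_finset_le _ _) hsum
  have hhalf_ne : volume (B q₂) / 2 ≠ ⊤ :=
    ne_top_of_le_ne_top hfin2 ENNReal.half_le_self
  have key : volume (B q₂) / 2 ≤ volume (B q₃) := by
    have h' : volume (B q₂) / 2 + volume (B q₂) / 2 ≤ volume (B q₃) + volume (B q₂) / 2 := by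
      rwa [ENNReal.add_halves]
    exact (ENNReal.add_le_add_iff_right hhalf_ne).1 h'
  have h2pos : 0 < volume (B q₂) :=
    lt_of_lt_of_le (ENNReal.div_pos h1'.ne' (by norm_num)) h1
  exact ⟨key, lt_of_lt_of_le (ENNReal.div_pos h2pos.ne' (by norm_num)) key⟩
end

section
/- Let B ⊆ [0,1] be a finite union of dyadic intervals of the common form [a/2^l, (a+1)/2^l] with a ∈ ℤ. Let x ≥ 2^{l+1} be an integer, let σ ∈ (0, 1/2], η ∈ ℝ, and let E(x) = ⋃_{y=0}^{x} [ (y+η)/x − σ/x, (y+η)/x + σ/x ] ∩ [0,1]. Then the Lebesgue measure of B ∩ E(x) is at most 2⁴·σ·mes(B). -/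
open MeasureTheory

theorem stmt10 (l : ℕ) (B : Set ℝ) (hB01 : B ⊆ Set.Icc 0 1)
    (hB : ∃ S : Finset ℤ, B = ⋃ a ∈ S, Set.Icc ((a:ℝ)/2^l) (((a:ℝ)+1)/2^l))
    (x : ℕ) (hx : 2^(l+1) ≤ x) (σ η : ℝ) (hσ : 0 < σ) (hσ' : σ ≤ 1/2) :
    volume (B ∩ ((⋃ y ∈ Finset.range (x+1),
        Set.Icc (((y:ℝ)+η)/x - σ/x) (((y:ℝ)+η)/x + σ/x)) ∩ Set.Icc 0 1))
      ≤ ENNReal.ofReal (2^4 * σ) * volume B := by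
  classical
  obtain ⟨S, rfl⟩ := hB
  have hPpos : (0:ℝ) < 2^l := by positivity
  have hxR : (2:ℝ) * 2^l ≤ (x:ℝ) := by
    calc (2:ℝ) * 2^l = ((2^(l+1) : ℕ) : ℝ) := by push_cast; ring
    _ ≤ (x:ℝ) := by exact_mod_cast hx
  have hxpos : (0:ℝ) < (x:ℝ) := by nlinarith
  set I : ℕ → Set ℝ := fun y => Set.Icc (((y:ℝ)+η)/x - σ/x) (((y:ℝ)+η)/x + σ/x) with hI
  set J : ℤ → Set ℝ := fun a => Set.Icc ((a:ℝ)/2^l) (((a:ℝ)+1)/2^l) with hJ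
  have hvolJ : ∀ a : ℤ, volume (J a) = ENNReal.ofReal (1/2^l) := by
    intro a
    rw [hJ]
    simp only [Real.volume_Icc]
    congr 1
    field_simp; ring
  -- per-component bound
  have key : ∀ a : ℤ, ∑ y ∈ Finset.range (x+1), volume (J a ∩ I y)
      ≤ ENNReal.ofReal (2^4*σ) * volume (J a) := by
    intro a
    set u : ℝ := (x:ℝ) * a / 2^l - η - σ with hu
    set L : ℝ := (x:ℝ) / 2^l + 2*σ with hL
    set T : Finset ℕ := (Finset.range (x+1)).filter (fun y => (J a ∩ I y).Nonempty) with hT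
    have hmem : ∀ y ∈ T, u ≤ (y:ℝ) ∧ (y:ℝ) ≤ u + L := by
      intro y hy
      rw [hT, Finset.mem_filter] at hy
      obtain ⟨z, hz1, hz2⟩ := hy.2
      rw [hJ] at hz1; rw [hI] at hz2
      have ha1 : (a:ℝ)/2^l ≤ z := hz1.1
      have ha2 : z ≤ ((a:ℝ)+1)/2^l := hz1.2
      have hb1 : ((y:ℝ)+η)/x - σ/x ≤ z := hz2.1
      have hb2 : z ≤ ((y:ℝ)+η)/x + σ/x := hz2.2
      have e1 : (a:ℝ) ≤ z * 2^l := (div_le_iff₀ hPpos).mp ha1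
      have e2 : z * (x:ℝ) ≤ (y:ℝ) + η + σ := by
        have : z ≤ ((y:ℝ) + η + σ)/x := by
          have : ((y:ℝ)+η)/x + σ/x = ((y:ℝ) + η + σ)/x := by ring
          linarith [hb2, this.le]
        exact (le_div_iff₀ hxpos).mp this
      have e3 : ((y:ℝ) + η - σ)/x ≤ z := by
        have : ((y:ℝ)+η)/x - σ/x = ((y:ℝ) + η - σ)/x := by ring
        linarith [hb1]
      have e4 : (y:ℝ) + η - σ ≤ z * x := (div_le_iff₀ hxpos).mp e3
      have e5 : z * 2^l ≤ (a:ℝ) + 1 := (le_div_iff₀ hPpos).mp ha2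
      constructor
      · rw [hu, sub_le_iff_le_add, sub_le_iff_le_add, div_le_iff₀ hPpos]
        nlinarith [mul_le_mul_of_nonneg_left e2 hPpos.le,
          mul_le_mul_of_nonneg_right e1 hxpos.le]
      · have hstep : ((y:ℝ) + η - σ) * 2^l ≤ (x:ℝ) * a + x := by
          nlinarith [mul_le_mul_of_nonneg_right e4 hPpos.le,
            mul_le_mul_of_nonneg_left e5 hxpos.le]
        have h6 := (le_div_iff₀ hPpos).mpr hstep
        have hsplit : ((x:ℝ)*a + x)/2^l = (x:ℝ)*a/2^l + (x:ℝ)/2^l := by ring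
        rw [hu, hL]
        linarith
    have hcard : (T.card : ℝ) ≤ L + 1 := by
      have hsub : ∀ y ∈ T, (y:ℤ) ∈ Finset.Icc ⌈u⌉ ⌊u + L⌋ := by
        intro y hy
        obtain ⟨h1, h2⟩ := hmem y hy
        rw [Finset.mem_Icc]
        exact ⟨Int.ceil_le.mpr (by exact_mod_cast h1), Int.le_floor.mpr (by exact_mod_cast h2)⟩
      have hinj : Set.InjOn (fun y : ℕ => (y:ℤ)) T := fun p _ q _ h => Nat.cast_injective h
      have h1 : T.card ≤ (Finset.Icc ⌈u⌉ ⌊u + L⌋).card :=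
        Finset.card_le_card_of_injOn _ hsub hinj
      rw [Int.card_Icc] at h1
      have hLpos : (0:ℝ) ≤ L + 1 := by
        rw [hL]; positivity
      have h2 : ((⌊u + L⌋ + 1 - ⌈u⌉).toNat : ℝ) ≤ L + 1 := by
        rcases le_or_gt (⌊u + L⌋ + 1 - ⌈u⌉) 0 with h | h
        · rw [Int.toNat_of_nonpos h]; simpa using hLpos
        · have e : (((⌊u + L⌋ + 1 - ⌈u⌉).toNat : ℕ) : ℝ)
              = ((⌊u + L⌋ : ℝ) + 1 - (⌈u⌉ : ℝ)) := by
            rw [show (((⌊u + L⌋ + 1 - ⌈u⌉).toNat : ℕ) : ℝ)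
                = (((⌊u + L⌋ + 1 - ⌈u⌉).toNat : ℤ) : ℝ) by push_cast; ring,
              Int.toNat_of_nonneg h.le]
            push_cast; ring
          rw [e]
          have f1 : (⌊u + L⌋ : ℝ) ≤ u + L := Int.floor_le _
          have f2 : u ≤ (⌈u⌉ : ℝ) := Int.le_ceil _
          linarith
      calc (T.card : ℝ) ≤ ((⌊u + L⌋ + 1 - ⌈u⌉).toNat : ℝ) := by exact_mod_cast h1
        _ ≤ L + 1 := h2
    have hsum : ∑ y ∈ Finset.range (x+1), volume (J a ∩ I y)
        = ∑ y ∈ T, volume (J a ∩ I y) := by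
      refine (Finset.sum_subset (Finset.filter_subset _ _) ?_).symm
      intro y hy hyT
      have hne : ¬ (J a ∩ I y).Nonempty := fun hne =>
        hyT (Finset.mem_filter.mpr ⟨hy, hne⟩)
      rw [Set.not_nonempty_iff_eq_empty.mp hne, measure_empty]
    have hvolI : ∀ y : ℕ, volume (J a ∩ I y) ≤ ENNReal.ofReal (2*σ/x) := by
      intro y
      refine le_trans (measure_mono Set.inter_subset_right) ?_
      rw [hI]
      simp only [Real.volume_Icc]
      apply ENNReal.ofReal_le_ofReal
      ring_nf
      exact le_refl _
    have hreal : (T.card : ℝ) * (2*σ/x) ≤ 2^4*σ * (1/2^l) := by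
      have hc0 : (0:ℝ) ≤ (T.card : ℝ) := Nat.cast_nonneg _
      rw [mul_div_assoc']
      rw [show (2:ℝ)^4*σ * (1/2^l) = (2^4*σ)/2^l by ring]
      rw [div_le_div_iff₀ hxpos hPpos]
      have h2 : (T.card : ℝ) * 2^l ≤ (x:ℝ) + (2*σ+1) * 2^l := by
        have := mul_le_mul_of_nonneg_right hcard hPpos.le
        rw [hL] at this
        calc (T.card:ℝ) * 2^l ≤ ((x:ℝ)/2^l + 2*σ + 1) * 2^l := this
          _ = (x:ℝ) + (2*σ+1) * 2^l := by field_simp; ring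
      have h3 := mul_le_mul_of_nonneg_right h2 (by positivity : (0:ℝ) ≤ 2*σ)
      have h4 := mul_le_mul_of_nonneg_right hxR (by positivity : (0:ℝ) ≤ 2*σ)
      have h5 := mul_le_mul_of_nonneg_right (by linarith : 2*σ+1 ≤ (2:ℝ))
        (by positivity : (0:ℝ) ≤ 2^l*(2*σ))
      nlinarith [mul_pos hσ hxpos]
    calc ∑ y ∈ Finset.range (x+1), volume (J a ∩ I y)
        = ∑ y ∈ T, volume (J a ∩ I y) := hsum
      _ ≤ ∑ _y ∈ T, ENNReal.ofReal (2*σ/x) := Finset.sum_le_sum (fun y _ => hvolI y)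
      _ = (T.card : ℕ) • ENNReal.ofReal (2*σ/x) := by rw [Finset.sum_const]
      _ = ENNReal.ofReal ((T.card : ℝ) * (2*σ/x)) := by
          rw [nsmul_eq_mul, ← ENNReal.ofReal_natCast,
            ← ENNReal.ofReal_mul (Nat.cast_nonneg _)]
      _ ≤ ENNReal.ofReal (2^4*σ * (1/2^l)) := ENNReal.ofReal_le_ofReal hreal
      _ = ENNReal.ofReal (2^4*σ) * volume (J a) := by
          rw [hvolJ a, ← ENNReal.ofReal_mul (by positivity)]
  -- a.e. disjointness of the dyadic intervals
  have hdisj0 : ∀ a b : ℤ, a < b → volume (J a ∩ J b) = 0 := by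
    intro a b hab
    have hsub : J a ∩ J b ⊆ Set.Icc ((b:ℝ)/2^l) (((a:ℝ)+1)/2^l) := by
      rintro z ⟨h1, h2⟩
      exact ⟨h2.1, h1.2⟩
    refine measure_mono_null hsub ?_
    rw [Real.volume_Icc, ENNReal.ofReal_eq_zero]
    have hb : (a:ℝ) + 1 ≤ (b:ℝ) := by exact_mod_cast hab
    have : ((a:ℝ)+1)/2^l ≤ (b:ℝ)/2^l := by gcongr
    linarith
  have hdisj : (S : Set ℤ).Pairwise (Function.onFun (MeasureTheory.AEDisjoint volume) J) := by
    intro a _ b _ hab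
    rcases (Ne.lt_or_gt hab) with h | h
    · exact hdisj0 a b h
    · rw [Function.onFun, AEDisjoint, Set.inter_comm]
      exact hdisj0 b a h
  have hvolB : volume (⋃ a ∈ S, J a) = ∑ a ∈ S, volume (J a) :=
    measure_biUnion_finset₀ hdisj (fun a _ => measurableSet_Icc.nullMeasurableSet)
  -- assemble
  have hsub : (⋃ a ∈ S, J a) ∩ ((⋃ y ∈ Finset.range (x+1), I y) ∩ Set.Icc 0 1)
      ⊆ ⋃ a ∈ S, ⋃ y ∈ Finset.range (x+1), (J a ∩ I y) := by
    rintro z ⟨hz1, hz2, _⟩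
    simp only [Set.mem_iUnion] at hz1 hz2 ⊢
    obtain ⟨a, ha, hza⟩ := hz1
    obtain ⟨y, hy, hzy⟩ := hz2
    exact ⟨a, ha, y, hy, hza, hzy⟩
  calc volume ((⋃ a ∈ S, J a) ∩ ((⋃ y ∈ Finset.range (x+1), I y) ∩ Set.Icc 0 1))
      ≤ volume (⋃ a ∈ S, ⋃ y ∈ Finset.range (x+1), (J a ∩ I y)) := measure_mono hsub
    _ ≤ ∑ a ∈ S, volume (⋃ y ∈ Finset.range (x+1), (J a ∩ I y)) :=
        measure_biUnion_finset_le S _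
    _ ≤ ∑ a ∈ S, ∑ y ∈ Finset.range (x+1), volume (J a ∩ I y) :=
        Finset.sum_le_sum (fun a _ => measure_biUnion_finset_le _ _)
    _ ≤ ∑ a ∈ S, ENNReal.ofReal (2^4*σ) * volume (J a) :=
        Finset.sum_le_sum (fun a _ => key a)
    _ = ENNReal.ofReal (2^4*σ) * ∑ a ∈ S, volume (J a) := by rw [Finset.mul_sum]
    _ = ENNReal.ofReal (2^4*σ) * volume (⋃ a ∈ S, J a) := by rw [hvolB]
end

section
/- Let γ > 1, 0 ≤ a < 1, A = 4, and define δ(μ, ν) = 2ε·2^{μ−ν}/(ν^{2−a}·(μ+1)^a). Then there exists an absolute constant C such that for all ε > 0 and all sufficiently large X (depending on γ, ε): Σ_{X ≤ ν < 4(X+1)} Σ_{1 ≤ μ ≤ ν + log₂ γ + 2} δ(μ, ν)·max(√(2^{ν−μ}/γ), 2^{ν−μ}, 1) ≤ C·ε/(1−a). -/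
lemma sumpow_aux (a : ℝ) (ha : 0 ≤ a) (ha' : a < 1) :
    ∀ N : ℕ, ∑ μ ∈ Finset.Icc 1 N, (1:ℝ)/(((μ:ℝ)+1)^a) ≤ ((N:ℝ)+1)^(1-a)/(1-a) := by
  have hp : (0:ℝ) < 1 - a := by linarith
  intro N
  induction N with
  | zero =>
    simp only [Nat.cast_zero, zero_add, Real.one_rpow]
    rw [show Finset.Icc 1 0 = ∅ by simp]
    simp only [Finset.sum_empty]
    positivity
  | succ n ih =>
    rw [Finset.sum_Icc_succ_top (by omega : 1 ≤ n+1)]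
    have hpos : (0:ℝ) < (n:ℝ) + 2 := by positivity
    have key : (1-a) * ((n:ℝ)+2)^(-a) ≤ ((n:ℝ)+2)^(1-a) - ((n:ℝ)+1)^(1-a) := by
      have hs : (-1:ℝ) ≤ -(1/((n:ℝ)+2)) := by
        rw [neg_le_neg_iff]
        rw [div_le_one hpos]; linarith
      have hb := rpow_one_add_le_one_add_mul_self hs hp.le (by linarith : (1:ℝ)-a ≤ 1)
      have hmul := mul_le_mul_of_nonneg_left hb
          (Real.rpow_nonneg hpos.le (1-a))
      have e1 : ((n:ℝ)+2)^(1-a) * (1 + -(1/((n:ℝ)+2)))^(1-a) = ((n:ℝ)+1)^(1-a) := by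
        rw [← Real.mul_rpow hpos.le (by nlinarith [div_nonneg (by norm_num : (0:ℝ) ≤ 1) hpos.le])]
        congr 1
        field_simp
        ring
      have e2 : ((n:ℝ)+2)^(-a) = ((n:ℝ)+2)^(1-a) / ((n:ℝ)+2) := by
        rw [show -a = (1-a) - 1 by ring, Real.rpow_sub hpos, Real.rpow_one]
      rw [e1] at hmul
      rw [e2]
      have : ((n:ℝ)+2)^(1-a) * (1 + (1-a) * -(1/((n:ℝ)+2)))
          = ((n:ℝ)+2)^(1-a) - (1-a) * (((n:ℝ)+2)^(1-a) / ((n:ℝ)+2)) := by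
        field_simp; ring
      rw [this] at hmul
      linarith
    push_cast
    rw [show ((n:ℝ)+1+1) = (n:ℝ)+2 by ring]
    rw [show (1:ℝ)/((n:ℝ)+2)^a = ((n:ℝ)+2)^(-a) by
      rw [Real.rpow_neg hpos.le, one_div]]
    have k2 : ((n:ℝ)+2)^(-a) ≤ (((n:ℝ)+2)^(1-a) - ((n:ℝ)+1)^(1-a))/(1-a) := by
      rw [le_div_iff₀ hp]; linarith
    rw [sub_div] at k2
    linarith

theorem stmt14 (γ : ℝ) (hγ : 1 < γ) (a : ℝ) (ha : 0 ≤ a) (ha' : a < 1) :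
    ∃ C > (0:ℝ), ∀ ε : ℝ, 0 < ε → ∃ X₀ : ℕ, ∀ X : ℕ, X₀ ≤ X →
      ∑ ν ∈ Finset.Ico X (4*(X+1)),
        ∑ μ ∈ Finset.Icc 1 (ν + ⌈Real.logb 2 γ⌉₊ + 2),
          (2 * ε * (2:ℝ)^((μ:ℤ)-(ν:ℤ)) / ((ν:ℝ)^((2:ℝ)-a) * ((μ:ℝ)+1)^a)) *
            max (Real.sqrt ((2:ℝ)^((ν:ℤ)-(μ:ℤ)) / γ))
              (max ((2:ℝ)^((ν:ℤ)-(μ:ℤ))) 1)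
        ≤ C * ε / (1-a) := by
  have hγ0 : (0:ℝ) < γ := by linarith
  have hp : (0:ℝ) < 1 - a := by linarith
  set L : ℕ := ⌈Real.logb 2 γ⌉₊ with hLdef
  -- 2^(L+2) ≤ 8γ
  have hLγ : (2:ℝ)^((L:ℤ)+2) ≤ 8*γ := by
    have hlb : (0:ℝ) ≤ Real.logb 2 γ := Real.logb_nonneg one_lt_two hγ.le
    have h1 : (L:ℝ) ≤ Real.logb 2 γ + 1 := (Nat.ceil_lt_add_one hlb).le
    have h2 : (2:ℝ)^((L:ℤ)+2) = (2:ℝ)^(((L:ℝ))+2) := by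
      rw [← Real.rpow_intCast]
      push_cast
      ring_nf
    rw [h2]
    calc (2:ℝ)^(((L:ℝ))+2) ≤ (2:ℝ)^(Real.logb 2 γ + 3) :=
          Real.rpow_le_rpow_of_exponent_le one_le_two (by linarith)
    _ = 8*γ := by
        rw [Real.rpow_add two_pos, Real.rpow_logb two_pos (by norm_num) hγ0]
        norm_num
        ring
  set K : ℝ := 4/(1-a) + 16*γ*((L:ℝ)+2) with hKdef
  have hK0 : 0 < K := by positivity
  refine ⟨64*γ*((L:ℝ)+2) + 16, by positivity, ?_⟩
  intro ε hε
  refine ⟨4, ?_⟩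
  intro X hX
  have hX0 : 0 < X := by omega
  have hXR : (4:ℝ) ≤ (X:ℝ) := by exact_mod_cast hX
  -- inner bound
  have inner : ∀ ν ∈ Finset.Ico X (4*(X+1)),
      ∑ μ ∈ Finset.Icc 1 (ν + L + 2),
          (2 * ε * (2:ℝ)^((μ:ℤ)-(ν:ℤ)) / ((ν:ℝ)^((2:ℝ)-a) * ((μ:ℝ)+1)^a)) *
            max (Real.sqrt ((2:ℝ)^((ν:ℤ)-(μ:ℤ)) / γ))
              (max ((2:ℝ)^((ν:ℤ)-(μ:ℤ))) 1)
        ≤ K * ε / (ν:ℝ) := by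
    intro ν hν
    rw [Finset.mem_Ico] at hν
    have hν4 : 4 ≤ ν := le_trans hX hν.1
    have hν1 : (1:ℝ) ≤ (ν:ℝ) := by
      have : (4:ℝ) ≤ (ν:ℝ) := by exact_mod_cast hν4
      linarith
    have hν0 : (0:ℝ) < (ν:ℝ) := by linarith
    have hD0 : (0:ℝ) < (ν:ℝ)^((2:ℝ)-a) := Real.rpow_pos_of_pos hν0 _
    -- max bound
    have maxb : ∀ μ : ℕ,
        max (Real.sqrt ((2:ℝ)^((ν:ℤ)-(μ:ℤ)) / γ))
          (max ((2:ℝ)^((ν:ℤ)-(μ:ℤ))) 1) ≤ max ((2:ℝ)^((ν:ℤ)-(μ:ℤ))) 1 := by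
      intro μ
      apply max_le _ le_rfl
      set x : ℝ := (2:ℝ)^((ν:ℤ)-(μ:ℤ)) with hx
      have hx0 : 0 < x := zpow_pos two_pos _
      have h1 : x / γ ≤ x := div_le_self hx0.le hγ.le
      have h2 : Real.sqrt x ≤ max x 1 := by
        have hM1 : (1:ℝ) ≤ max x 1 := le_max_right x 1
        have hMx : x ≤ max x 1 := le_max_left x 1
        have : x ≤ (max x 1)^2 := by nlinarith
        calc Real.sqrt x ≤ Real.sqrt ((max x 1)^2) := Real.sqrt_le_sqrt this
        _ = max x 1 := Real.sqrt_sq (by linarith)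
      exact le_trans (Real.sqrt_le_sqrt h1) h2
    -- split the sum
    rw [show Finset.Icc 1 (ν + L + 2) = Finset.Ioc 0 (ν + L + 2) from Finset.Icc_add_one_left_eq_Ioc 0 _]
    rw [← Finset.sum_Ioc_consecutive _ (Nat.zero_le ν) (by omega : ν ≤ ν + L + 2)]
    have S1 : ∑ μ ∈ Finset.Ioc 0 ν,
        (2 * ε * (2:ℝ)^((μ:ℤ)-(ν:ℤ)) / ((ν:ℝ)^((2:ℝ)-a) * ((μ:ℝ)+1)^a)) *
          max (Real.sqrt ((2:ℝ)^((ν:ℤ)-(μ:ℤ)) / γ))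
            (max ((2:ℝ)^((ν:ℤ)-(μ:ℤ))) 1)
        ≤ 4 * ε / ((1-a) * (ν:ℝ)) := by
      have step : ∀ μ ∈ Finset.Ioc 0 ν,
          (2 * ε * (2:ℝ)^((μ:ℤ)-(ν:ℤ)) / ((ν:ℝ)^((2:ℝ)-a) * ((μ:ℝ)+1)^a)) *
            max (Real.sqrt ((2:ℝ)^((ν:ℤ)-(μ:ℤ)) / γ))
              (max ((2:ℝ)^((ν:ℤ)-(μ:ℤ))) 1)
          ≤ (2 * ε / (ν:ℝ)^((2:ℝ)-a)) * (1/(((μ:ℝ)+1)^a)) := by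
        intro μ hμ
        rw [Finset.mem_Ioc] at hμ
        have hμν : (μ:ℤ) ≤ (ν:ℤ) := by exact_mod_cast hμ.2
        have hE0 : (0:ℝ) < ((μ:ℝ)+1)^a := Real.rpow_pos_of_pos (by positivity) _
        have hA0 : (0:ℝ) ≤ 2 * ε * (2:ℝ)^((μ:ℤ)-(ν:ℤ)) / ((ν:ℝ)^((2:ℝ)-a) * ((μ:ℝ)+1)^a) := by
          have := zpow_pos (two_pos (α := ℝ)) ((μ:ℤ)-(ν:ℤ))
          positivity
        have hmax : max ((2:ℝ)^((ν:ℤ)-(μ:ℤ))) 1 = (2:ℝ)^((ν:ℤ)-(μ:ℤ)) :=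
          max_eq_left (one_le_zpow₀ (by norm_num) (by omega))
        calc _ ≤ (2 * ε * (2:ℝ)^((μ:ℤ)-(ν:ℤ)) / ((ν:ℝ)^((2:ℝ)-a) * ((μ:ℝ)+1)^a)) *
              max ((2:ℝ)^((ν:ℤ)-(μ:ℤ))) 1 := mul_le_mul_of_nonneg_left (maxb μ) hA0
        _ = (2 * ε / (ν:ℝ)^((2:ℝ)-a)) * (1/(((μ:ℝ)+1)^a)) := by
            rw [hmax]
            have hz : (2:ℝ)^((μ:ℤ)-(ν:ℤ)) * (2:ℝ)^((ν:ℤ)-(μ:ℤ)) = 1 := by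
              rw [← zpow_add₀ (two_ne_zero : (2:ℝ) ≠ 0)]
              norm_num
            field_simp
            nlinarith [hz]
      calc _ ≤ ∑ μ ∈ Finset.Ioc 0 ν, (2 * ε / (ν:ℝ)^((2:ℝ)-a)) * (1/(((μ:ℝ)+1)^a)) :=
            Finset.sum_le_sum step
      _ = (2 * ε / (ν:ℝ)^((2:ℝ)-a)) * ∑ μ ∈ Finset.Icc 1 ν, (1/(((μ:ℝ)+1)^a)) := by
          rw [← Finset.mul_sum, show Finset.Icc 1 ν = Finset.Ioc 0 ν from Finset.Icc_add_one_left_eq_Ioc 0 ν]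
      _ ≤ (2 * ε / (ν:ℝ)^((2:ℝ)-a)) * (((ν:ℝ)+1)^(1-a)/(1-a)) := by
          apply mul_le_mul_of_nonneg_left (sumpow_aux a ha ha' ν) (by positivity)
      _ ≤ (2 * ε / (ν:ℝ)^((2:ℝ)-a)) * ((2*(ν:ℝ)^(1-a))/(1-a)) := by
          apply mul_le_mul_of_nonneg_left _ (by positivity)
          gcongr
          calc ((ν:ℝ)+1)^(1-a) ≤ (2*(ν:ℝ))^(1-a) :=
                Real.rpow_le_rpow (by linarith) (by linarith) hp.le
          _ = 2^((1:ℝ)-a) * (ν:ℝ)^(1-a) := Real.mul_rpow (by norm_num) hν0.le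
          _ ≤ 2 * (ν:ℝ)^(1-a) := by
              apply mul_le_mul_of_nonneg_right _ (Real.rpow_nonneg hν0.le _)
              calc (2:ℝ)^((1:ℝ)-a) ≤ (2:ℝ)^(1:ℝ) :=
                    Real.rpow_le_rpow_of_exponent_le one_le_two (by linarith)
              _ = 2 := Real.rpow_one 2
      _ = 4 * ε / ((1-a) * (ν:ℝ)) := by
          rw [show (2:ℝ)-a = (1-a)+1 by ring, Real.rpow_add hν0, Real.rpow_one]
          have h1 : ((ν:ℝ))^((1:ℝ)-a) ≠ 0 := ne_of_gt (Real.rpow_pos_of_pos hν0 _)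
          field_simp
          ring
    have S2 : ∑ μ ∈ Finset.Ioc ν (ν + L + 2),
        (2 * ε * (2:ℝ)^((μ:ℤ)-(ν:ℤ)) / ((ν:ℝ)^((2:ℝ)-a) * ((μ:ℝ)+1)^a)) *
          max (Real.sqrt ((2:ℝ)^((ν:ℤ)-(μ:ℤ)) / γ))
            (max ((2:ℝ)^((ν:ℤ)-(μ:ℤ))) 1)
        ≤ ((L:ℝ)+2) * (16*γ*ε/(ν:ℝ)) := by
      have hνD : (ν:ℝ) ≤ (ν:ℝ)^((2:ℝ)-a) := by
        calc (ν:ℝ) = (ν:ℝ)^(1:ℝ) := (Real.rpow_one _).symm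
        _ ≤ (ν:ℝ)^((2:ℝ)-a) := Real.rpow_le_rpow_of_exponent_le hν1 (by linarith)
      have step : ∀ μ ∈ Finset.Ioc ν (ν + L + 2),
          (2 * ε * (2:ℝ)^((μ:ℤ)-(ν:ℤ)) / ((ν:ℝ)^((2:ℝ)-a) * ((μ:ℝ)+1)^a)) *
            max (Real.sqrt ((2:ℝ)^((ν:ℤ)-(μ:ℤ)) / γ))
              (max ((2:ℝ)^((ν:ℤ)-(μ:ℤ))) 1)
          ≤ 16*γ*ε/(ν:ℝ) := by
        intro μ hμ
        rw [Finset.mem_Ioc] at hμ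
        have hA0 : (0:ℝ) ≤ 2 * ε * (2:ℝ)^((μ:ℤ)-(ν:ℤ)) / ((ν:ℝ)^((2:ℝ)-a) * ((μ:ℝ)+1)^a) := by
          have h1 := zpow_pos (two_pos (α := ℝ)) ((μ:ℤ)-(ν:ℤ))
          have h2 : (0:ℝ) < ((μ:ℝ)+1)^a := Real.rpow_pos_of_pos (by positivity) _
          positivity
        have hmax : max ((2:ℝ)^((ν:ℤ)-(μ:ℤ))) 1 = 1 :=
          max_eq_right (zpow_le_one_of_nonpos₀ (by norm_num) (by omega))
        calc _ ≤ (2 * ε * (2:ℝ)^((μ:ℤ)-(ν:ℤ)) / ((ν:ℝ)^((2:ℝ)-a) * ((μ:ℝ)+1)^a)) *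
              max ((2:ℝ)^((ν:ℤ)-(μ:ℤ))) 1 := mul_le_mul_of_nonneg_left (maxb μ) hA0
        _ = 2 * ε * (2:ℝ)^((μ:ℤ)-(ν:ℤ)) / ((ν:ℝ)^((2:ℝ)-a) * ((μ:ℝ)+1)^a) := by
            rw [hmax, mul_one]
        _ ≤ 2 * ε * (8*γ) / ((ν:ℝ) * 1) := by
            apply div_le_div₀ (by positivity)
            · apply mul_le_mul_of_nonneg_left _ (by positivity)
              calc (2:ℝ)^((μ:ℤ)-(ν:ℤ)) ≤ (2:ℝ)^((L:ℤ)+2) :=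
                    zpow_le_zpow_right₀ one_le_two (by omega)
              _ ≤ 8*γ := hLγ
            · positivity
            · apply mul_le_mul hνD _ (by norm_num) (by positivity)
              exact Real.one_le_rpow (by linarith [Nat.cast_nonneg (α := ℝ) μ]) ha
        _ = 16*γ*ε/(ν:ℝ) := by rw [mul_one]; ring
      calc _ ≤ ∑ _μ ∈ Finset.Ioc ν (ν + L + 2), 16*γ*ε/(ν:ℝ) := Finset.sum_le_sum step
      _ = ((L:ℝ)+2) * (16*γ*ε/(ν:ℝ)) := by
          rw [Finset.sum_const, Nat.card_Ioc]
          have : ν + L + 2 - ν = L + 2 := by omega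
          rw [this]
          push_cast
          ring
    calc _ ≤ 4 * ε / ((1-a) * (ν:ℝ)) + ((L:ℝ)+2) * (16*γ*ε/(ν:ℝ)) := add_le_add S1 S2
    _ = K * ε / (ν:ℝ) := by
        rw [hKdef]
        field_simp
  -- outer sum
  calc _ ≤ ∑ ν ∈ Finset.Ico X (4*(X+1)), K * ε / (ν:ℝ) := Finset.sum_le_sum inner
  _ ≤ ∑ _ν ∈ Finset.Ico X (4*(X+1)), K * ε / (X:ℝ) := by
      apply Finset.sum_le_sum
      intro ν hν
      rw [Finset.mem_Ico] at hν
      have : (X:ℝ) ≤ (ν:ℝ) := by exact_mod_cast hν.1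
      apply div_le_div_of_nonneg_left (by positivity) (by linarith) this
  _ = (3*(X:ℝ)+4) * (K * ε / (X:ℝ)) := by
      rw [Finset.sum_const, Nat.card_Ico]
      have : 4*(X+1) - X = 3*X+4 := by omega
      rw [this]
      push_cast
      ring
  _ ≤ 4 * (K * ε) := by
      rw [div_eq_mul_inv, ← mul_assoc]
      rw [show (3*(X:ℝ)+4) * (K*ε) * (X:ℝ)⁻¹ = ((3*(X:ℝ)+4)/(X:ℝ)) * (K*ε) by ring]
      apply mul_le_mul_of_nonneg_right _ (by positivity)
      rw [div_le_iff₀ (by linarith)]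
      linarith
  _ ≤ (64*γ*((L:ℝ)+2) + 16) * ε / (1-a) := by
      have h64 : (0:ℝ) ≤ 64*γ*((L:ℝ)+2)*ε := by positivity
      have h1 : 64*γ*((L:ℝ)+2)*ε ≤ 64*γ*((L:ℝ)+2)*ε/(1-a) := by
        rw [le_div_iff₀ hp]
        exact mul_le_of_le_one_right h64 (by linarith)
      have h2 : 4*(K*ε) = 16*ε/(1-a) + 64*γ*((L:ℝ)+2)*ε := by
        rw [hKdef]; field_simp; ring
      have h3 : (64*γ*((L:ℝ)+2) + 16)*ε/(1-a) = 64*γ*((L:ℝ)+2)*ε/(1-a) + 16*ε/(1-a) := by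
        ring
      rw [h2, h3]
      linarith
end
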